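/- Let G be a topological group. If f : G → ℂ is almost periodic (its left translates form a relatively compact set in the uniform norm), then the set of right translates { Rₓf : x ∈ G } is also relatively compact in the uniform norm. -/

import Mathlib

open BoundedContinuousFunction

/-- The left translate `Lₓf`, `(Lₓf)(y) = f(xy)`, of a bounded continuous function. -/
noncomputable def leftTranslate {G : Type*} [Group G] [TopologicalSpace G]
    [IsTopologicalGroup G] (x : G) (f : G →ᵇ ℂ) : G →ᵇ ℂ :=
  f.compContinuous ⟨fun y => x * y, by continuity⟩

/-- The right translate `Rₓf`, `(Rₓf)(y) = f(yx)`, of a bounded continuous function. -/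
noncomputable def rightTranslate {G : Type*} [Group G] [TopologicalSpace G]
    [IsTopologicalGroup G] (x : G) (f : G →ᵇ ℂ) : G →ᵇ ℂ :=
  f.compContinuous ⟨fun y => y * x, by continuity⟩

lemma leftTranslate_apply {G : Type*} [Group G] [TopologicalSpace G]
    [IsTopologicalGroup G] (x : G) (f : G →ᵇ ℂ) (y : G) :
    leftTranslate x f y = f (x * y) := rfl

lemma rightTranslate_apply {G : Type*} [Group G] [TopologicalSpace G]
    [IsTopologicalGroup G] (x : G) (f : G →ᵇ ℂ) (y : G) :
    rightTranslate x f y = f (y * x) := rfl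

/-- If `f : G → ℂ` is almost periodic (its left translates form a relatively
compact set in the uniform norm), then its set of right translates is also relatively
compact in the uniform norm. -/
theorem stmt_10 (G : Type*) [Group G] [TopologicalSpace G] [IsTopologicalGroup G]
    (f : G →ᵇ ℂ)
    (hf : IsCompact (closure (Set.range fun x : G => leftTranslate x f))) :
    IsCompact (closure (Set.range fun x : G => rightTranslate x f)) := by
  -- it suffices to show the set of right translates is totally bounded
  suffices h : TotallyBounded (Set.range fun x : G => rightTranslate x f) by
    exact TotallyBounded.isCompact_of_isClosed h.closure isClosed_closure
  -- left translates are totally bounded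
  have hL : TotallyBounded (Set.range fun x : G => leftTranslate x f) :=
    (hf.totallyBounded).subset subset_closure
  rw [Metric.totallyBounded_iff]
  intro ε hε
  -- a finite ε/4-net for the left translates, within the set itself
  obtain ⟨t, htsub, htfin, htcov⟩ :=
    Metric.finite_approx_of_totallyBounded hL (ε/4) (by linarith)
  haveI := htfin.fintype
  choose w hw using fun g : t => (htsub g.2 : (g : G →ᵇ ℂ) ∈ Set.range _)
  -- the map `V x = (f (w g * x))_{g ∈ t}` has bounded, hence totally bounded, range
  set V : G → (t → ℂ) := fun x g => f (w g * x) with hV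
  have hVb : Set.range V ⊆ Metric.closedBall 0 ‖f‖ := by
    rintro _ ⟨x, rfl⟩
    rw [Metric.mem_closedBall]
    refine dist_pi_le_iff (norm_nonneg f) |>.2 fun g => ?_
    simpa [V] using f.norm_coe_le_norm (w g * x)
  have hVtb : TotallyBounded (Set.range V) :=
    (ProperSpace.isCompact_closedBall (0 : t → ℂ) ‖f‖).totallyBounded.subset hVb
  obtain ⟨u, husub, hufin, hucov⟩ :=
    Metric.finite_approx_of_totallyBounded hVtb (ε/4) (by linarith)
  choose b hb using fun j : u => (husub j.2 : (j : t → ℂ) ∈ Set.range V)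
  haveI := hufin.fintype
  refine ⟨Set.range fun j : u => rightTranslate (b j) f, Set.finite_range _, ?_⟩
  rintro _ ⟨x, rfl⟩
  -- find j such that V x is within ε/4 of V (b j)
  have hx : V x ∈ ⋃ y ∈ u, Metric.ball y (ε/4) := hucov ⟨x, rfl⟩
  simp only [Set.mem_iUnion, Metric.mem_ball] at hx
  obtain ⟨y, hyu, hy⟩ := hx
  refine Set.mem_biUnion ⟨⟨y, hyu⟩, rfl⟩ ?_
  rw [Metric.mem_ball]
  have key : dist (rightTranslate x f) (rightTranslate (b ⟨y, hyu⟩) f) ≤ 3 * (ε/4) := by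
    refine BoundedContinuousFunction.dist_le (by linarith) |>.2 fun z => ?_
    -- find g in the left net close to L_z f
    have hz : leftTranslate z f ∈ ⋃ g ∈ t, Metric.ball g (ε/4) := htcov ⟨z, rfl⟩
    simp only [Set.mem_iUnion, Metric.mem_ball] at hz
    obtain ⟨g, hgt, hg⟩ := hz
    set g' : t := ⟨g, hgt⟩
    have hw' : leftTranslate (w g') f = g := hw g'
    have h1 : ∀ v : G, dist (f (z * v)) (f (w g' * v)) ≤ ε/4 := fun v =>
      calc dist (f (z * v)) (f (w g' * v))
          = dist (leftTranslate z f v) (leftTranslate (w g') f v) := rfl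
        _ ≤ dist (leftTranslate z f) (leftTranslate (w g') f) :=
            BoundedContinuousFunction.dist_coe_le_dist v
        _ = dist (leftTranslate z f) g := by rw [hw']
        _ ≤ ε/4 := hg.le
    have h2 : dist (f (w g' * x)) (f (w g' * b ⟨y, hyu⟩)) ≤ ε/4 := by
      have hVx : dist (V x g') (V (b ⟨y, hyu⟩) g') ≤ dist (V x) (V (b ⟨y, hyu⟩)) :=
        dist_le_pi_dist _ _ g'
      have hby : V (b ⟨y, hyu⟩) = y := hb ⟨y, hyu⟩
      calc dist (f (w g' * x)) (f (w g' * b ⟨y, hyu⟩)) = dist (V x g') (V (b ⟨y, hyu⟩) g') := rfl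
        _ ≤ dist (V x) (V (b ⟨y, hyu⟩)) := hVx
        _ = dist (V x) y := by rw [hby]
        _ ≤ ε/4 := hy.le
    have h3 : dist (f (w g' * b ⟨y, hyu⟩)) (f (z * b ⟨y, hyu⟩)) ≤ ε/4 := by
      rw [dist_comm]; exact h1 (b ⟨y, hyu⟩)
    calc dist (rightTranslate x f z) (rightTranslate (b ⟨y, hyu⟩) f z)
        = dist (f (z * x)) (f (z * b ⟨y, hyu⟩)) := rfl
      _ ≤ dist (f (z * x)) (f (w g' * x)) + dist (f (w g' * x)) (f (w g' * b ⟨y, hyu⟩))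
            + dist (f (w g' * b ⟨y, hyu⟩)) (f (z * b ⟨y, hyu⟩)) := dist_triangle4 _ _ _ _
      _ ≤ ε/4 + ε/4 + ε/4 := add_le_add (add_le_add (h1 x) h2) h3
      _ = 3 * (ε/4) := by ring
  linarith
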